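/- For positive integers n and r with n ≥ r+2, the alternating sum ∑_{c=r+1}^{n} (-1)^{c+r+1} · C(c-2, r-1) · C(n, c) equals n - r. -/

import Mathlib

open Finset

/-- Shift an `Icc` sum by one. -/
lemma shiftIcc (a b : ℕ) (f : ℕ → ℤ) :
    ∑ c ∈ Finset.Icc (a + 1) (b + 1), f c = ∑ d ∈ Finset.Icc a b, f (d + 1) := by
  rw [← Finset.Ico_add_one_right_eq_Icc, ← Finset.Ico_add_one_right_eq_Icc, Finset.sum_Ico_eq_sum_range,
    Finset.sum_Ico_eq_sum_range]
  have h1 : b + 1 + 1 - (a + 1) = b + 1 - a := by omega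
  rw [h1]
  apply Finset.sum_congr rfl
  intro j _
  congr 1
  omega

/-- Alternating sum `∑_{f=k}^n (-1)^f C(f,k) C(n,f) = 0` for `k < n`. -/
lemma lemW (k n : ℕ) (h : k < n) :
    ∑ f ∈ Finset.Icc k n, (-1 : ℤ) ^ f * (f.choose k) * (n.choose f) = 0 := by
  rw [← Finset.Ico_add_one_right_eq_Icc, Finset.sum_Ico_eq_sum_range]
  have hnk : n + 1 - k = (n - k) + 1 := by omega
  rw [hnk]
  have key : ∀ j ∈ Finset.range (n - k + 1),
      (-1 : ℤ) ^ (k + j) * ((k + j).choose k) * (n.choose (k + j))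
        = ((-1) ^ k * (n.choose k)) * ((-1) ^ j * ((n - k).choose j)) := by
    intro j hj
    simp only [Finset.mem_range] at hj
    have h1 : k + j ≤ n := by omega
    have h2 : k ≤ k + j := Nat.le_add_right _ _
    have h3 := Nat.choose_mul (n := n) h2
    rw [Nat.add_sub_cancel_left] at h3
    have h4 : ((n.choose (k + j) : ℤ)) * ((k + j).choose k)
        = (n.choose k : ℤ) * ((n - k).choose j) := by exact_mod_cast congrArg Nat.cast h3
    rw [pow_add]
    linear_combination ((-1 : ℤ) ^ k * (-1) ^ j) * h4
  rw [Finset.sum_congr rfl key, ← Finset.mul_sum,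
    Int.alternating_sum_range_choose_of_ne (by omega : n - k ≠ 0), mul_zero]

/-- `∑_{d=r}^n (-1)^{d+r} C(d-1,r-1) C(n,d) = 1` for `n ≥ r ≥ 1`. -/
lemma lemT (r : ℕ) (hr : 1 ≤ r) : ∀ n, r ≤ n →
    ∑ d ∈ Finset.Icc r n, (-1 : ℤ) ^ (d + r) * ((d - 1).choose (r - 1)) * (n.choose d) = 1 := by
  intro n hn
  induction n, hn using Nat.le_induction with
  | base =>
    rw [Finset.Icc_self, Finset.sum_singleton]
    simp [← two_mul, pow_mul]
  | succ n hn ih =>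
    have hshift := shiftIcc (r - 1) n
      (fun d => (-1 : ℤ) ^ (d + r) * ((d - 1).choose (r - 1)) * ((n + 1).choose d))
    rw [show r - 1 + 1 = r from by omega] at hshift
    rw [hshift]
    simp only [Nat.add_sub_cancel]
    have hsplit : ∀ e ∈ Finset.Icc (r - 1) n,
        (-1 : ℤ) ^ (e + 1 + r) * (e.choose (r - 1)) * ((n + 1).choose (e + 1))
        = (-1 : ℤ) ^ (e + 1 + r) * (e.choose (r - 1)) * (n.choose (e + 1))
          + (-(1 : ℤ)) ^ (e + r) * (e.choose (r - 1)) * (n.choose e) * (-1) := by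
      intro e he
      rw [Nat.choose_succ_succ' n e]
      push_cast
      ring
    rw [Finset.sum_congr rfl hsplit, Finset.sum_add_distrib]
    have hA : ∑ e ∈ Finset.Icc (r - 1) n,
        (-1 : ℤ) ^ (e + 1 + r) * (e.choose (r - 1)) * (n.choose (e + 1)) = 1 := by
      have hback := shiftIcc (r - 1) n
        (fun d => (-1 : ℤ) ^ (d + r) * ((d - 1).choose (r - 1)) * (n.choose d))
      rw [show r - 1 + 1 = r from by omega] at hback
      simp only [Nat.add_sub_cancel] at hback
      rw [← hback, Finset.sum_Icc_succ_top (by omega : r ≤ n + 1), ih,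
        Nat.choose_succ_self n]
      simp
    have hB : ∑ e ∈ Finset.Icc (r - 1) n,
        (-(1 : ℤ)) ^ (e + r) * (e.choose (r - 1)) * (n.choose e) * (-1) = 0 := by
      have h5 : ∑ e ∈ Finset.Icc (r - 1) n,
          (-(1 : ℤ)) ^ (e + r) * (e.choose (r - 1)) * (n.choose e) * (-1)
          = (-(1 : ℤ)) ^ (r + 1) * ∑ e ∈ Finset.Icc (r - 1) n,
            (-1 : ℤ) ^ e * (e.choose (r - 1)) * (n.choose e) := by
        rw [Finset.mul_sum]
        apply Finset.sum_congr rfl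
        intro e he
        rw [pow_add]
        ring
      rw [h5, lemW (r - 1) n (by omega), mul_zero]
    rw [hA, hB, add_zero]

/-- For positive integers `n ≥ r+2`, the alternating sum
`∑_{c=r+1}^{n} (-1)^{c+r+1} C(c-2, r-1) C(n, c)` equals `n - r`. -/
theorem stmt_1 (n r : ℕ) (hr : 1 ≤ r) (h : r + 2 ≤ n) :
    ∑ c ∈ Finset.Icc (r + 1) n,
        (-1 : ℤ) ^ (c + r + 1) * ((c - 2).choose (r - 1)) * (n.choose c)
      = (n : ℤ) - r := by
  induction n, h using Nat.le_induction with
  | base =>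
    obtain ⟨s, rfl⟩ : ∃ s, r = s + 1 := ⟨r - 1, by omega⟩
    rw [Finset.sum_Icc_succ_top (by omega : s + 1 + 1 ≤ s + 1 + 2), Finset.Icc_self,
      Finset.sum_singleton]
    simp only [show s + 1 + 1 - 2 = s from by omega, show s + 1 + 2 - 2 = s + 1 from by omega,
      show s + 1 - 1 = s from by omega, Nat.choose_self, Nat.choose_succ_self_right]
    have e1 : (-1 : ℤ) ^ (s + 1 + 1 + (s + 1) + 1) = 1 := by
      rw [show s + 1 + 1 + (s + 1) + 1 = 2 * (s + 2) from by ring, pow_mul]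
      norm_num
    have e2 : (-1 : ℤ) ^ (s + 1 + 2 + (s + 1) + 1) = -1 := by
      rw [show s + 1 + 2 + (s + 1) + 1 = 2 * (s + 2) + 1 from by ring, pow_succ, pow_mul]
      norm_num
    rw [e1, e2]
    push_cast
    ring
  | succ n hn ih =>
    have hshift := shiftIcc r n
      (fun c => (-1 : ℤ) ^ (c + r + 1) * ((c - 2).choose (r - 1)) * ((n + 1).choose c))
    rw [hshift]
    simp only [show ∀ d : ℕ, d + 1 - 2 = d - 1 from fun d => by omega]
    have hsplit : ∀ d ∈ Finset.Icc r n,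
        (-1 : ℤ) ^ (d + 1 + r + 1) * ((d - 1).choose (r - 1)) * ((n + 1).choose (d + 1))
        = (-1 : ℤ) ^ (d + 1 + r + 1) * ((d - 1).choose (r - 1)) * (n.choose (d + 1))
          + (-(1 : ℤ)) ^ (d + r) * ((d - 1).choose (r - 1)) * (n.choose d) := by
      intro d hd
      rw [Nat.choose_succ_succ' n d]
      push_cast
      rw [show d + 1 + r + 1 = (d + r) + 2 from by ring, pow_add]
      ring
    rw [Finset.sum_congr rfl hsplit, Finset.sum_add_distrib]
    have hA : ∑ d ∈ Finset.Icc r n,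
        (-1 : ℤ) ^ (d + 1 + r + 1) * ((d - 1).choose (r - 1)) * (n.choose (d + 1))
        = (n : ℤ) - r := by
      have hback := shiftIcc r n
        (fun c => (-1 : ℤ) ^ (c + r + 1) * ((c - 2).choose (r - 1)) * (n.choose c))
      simp only [show ∀ d : ℕ, d + 1 - 2 = d - 1 from fun d => by omega] at hback
      rw [← hback, Finset.sum_Icc_succ_top (by omega : r + 1 ≤ n + 1), ih,
        Nat.choose_succ_self n]
      simp
    have hB : ∑ d ∈ Finset.Icc r n,
        (-(1 : ℤ)) ^ (d + r) * ((d - 1).choose (r - 1)) * (n.choose d) = 1 :=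
      lemT r hr n (by omega)
    rw [hA, hB]
    push_cast
    ring
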